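/- Let k ≥ 2 be an integer. If τ is a symmetric polynomial matrix whose entries have total degree at most k and rot rot τ = 0, then there exists a polynomial vector field v = (v₁, v₂) with components of total degree at most k+1 such that τ = def v. -/

import Mathlib

open MvPolynomial Matrix

/-- Real polynomials in two variables. -/
abbrev P2 := MvPolynomial (Fin 2) ℝ

lemma coeff_pderiv' (i : Fin 2) (p : P2) (m : Fin 2 →₀ ℕ) :
    coeff m (pderiv i p) = ((m i : ℝ) + 1) * coeff (m + Finsupp.single i 1) p := by
  induction p using MvPolynomial.induction_on' with
  | monomial s a =>
    rw [pderiv_monomial, coeff_monomial, coeff_monomial]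
    by_cases h : s = m + Finsupp.single i 1
    · subst h
      rw [if_pos (add_tsub_cancel_right m (Finsupp.single i 1))]
      have h2 : ((m + Finsupp.single i 1 : Fin 2 →₀ ℕ)) i = m i + 1 := by simp
      rw [h2, if_pos rfl]
      push_cast; ring
    · rw [if_neg h]
      by_cases h2 : s - Finsupp.single i 1 = m
      · rw [if_pos h2]
        by_cases h3 : s i = 0
        · simp [h3]
        · exfalso
          apply h
          have : Finsupp.single i 1 ≤ s := by
            rw [Finsupp.single_le_iff]; omega
          rw [← h2, tsub_add_cancel_of_le this]
      · rw [if_neg h2]; ring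
  | add p q hp hq => simp [hp, hq, mul_add]

lemma supp_of_pderiv_zero {i : Fin 2} {p : P2} (h : pderiv i p = 0) :
    ∀ m ∈ p.support, m i = 0 := by
  intro m hm
  by_contra hmi
  have h1 : coeff (m - Finsupp.single i 1) (pderiv i p) = 0 := by rw [h]; simp
  rw [coeff_pderiv'] at h1
  have hle : Finsupp.single i 1 ≤ m := by rw [Finsupp.single_le_iff]; omega
  rw [tsub_add_cancel_of_le hle] at h1
  have : coeff m p = 0 := by
    set n := ((m - Finsupp.single i 1 : Fin 2 →₀ ℕ)) i
    have hne : ((n : ℝ)) + 1 ≠ 0 := by positivity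
    exact (mul_eq_zero.mp h1).resolve_left hne
  exact absurd this (mem_support_iff.mp hm)

noncomputable def antid (i : Fin 2) (p : P2) : P2 :=
  ∑ m ∈ p.support, monomial (m + Finsupp.single i 1) (coeff m p / (m i + 1))

lemma pderiv_antid (i : Fin 2) (p : P2) : pderiv i (antid i p) = p := by
  rw [antid, map_sum]
  have : ∀ m ∈ p.support,
      pderiv i (monomial (m + Finsupp.single i 1) (coeff m p / (m i + 1)) : P2)
        = monomial m (coeff m p) := by
    intro m _
    rw [pderiv_monomial]
    rw [add_tsub_cancel_right m (Finsupp.single i 1)]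
    have h2 : ((m + Finsupp.single i 1 : Fin 2 →₀ ℕ)) i = m i + 1 := by simp
    rw [h2]
    congr 1
    have hne : (m i : ℝ) + 1 ≠ 0 := by positivity
    push_cast
    field_simp
  rw [Finset.sum_congr rfl this]
  exact support_sum_monomial_coeff p

lemma totalDegree_antid_le {i : Fin 2} {p : P2} {k : ℕ} (h : p.totalDegree ≤ k) :
    (antid i p).totalDegree ≤ k + 1 := by
  apply totalDegree_finsetSum_le
  intro m hm
  apply (totalDegree_monomial_le _ _).trans
  have heq : ((m + Finsupp.single i 1).sum fun _ e => e) = (m.sum fun _ e => e) + 1 := by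
    rw [Finsupp.sum_add_index (by simp) (by intros; rfl)]
    simp
  calc ((m + Finsupp.single i 1).sum fun _ e => e) = (m.sum fun _ e => e) + 1 := heq
    _ ≤ k + 1 := Nat.add_le_add_right ((le_totalDegree hm).trans h) 1

lemma pderiv_antid_ne {i j : Fin 2} {p : P2} (h : pderiv j p = 0) (hij : j ≠ i) :
    pderiv j (antid i p) = 0 := by
  rw [antid, map_sum]
  apply Finset.sum_eq_zero
  intro m hm
  rw [pderiv_monomial]
  have h0 : ((m + Finsupp.single i 1 : Fin 2 →₀ ℕ)) j = 0 := by
    simp [Finsupp.single_apply, hij.symm, supp_of_pderiv_zero h m hm]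
  rw [h0]
  simp

lemma pderiv_comm' (i j : Fin 2) (p : P2) :
    pderiv i (pderiv j p) = pderiv j (pderiv i p) := by
  by_cases hij : i = j
  · subst hij; rfl
  · apply MvPolynomial.ext
    intro m
    rw [coeff_pderiv', coeff_pderiv', coeff_pderiv', coeff_pderiv',
      add_right_comm m (Finsupp.single j 1) (Finsupp.single i 1)]
    have h1 : ((m + Finsupp.single j 1 : Fin 2 →₀ ℕ)) i = m i := by
      simp [Finsupp.single_apply, (Ne.symm hij : j ≠ i)]
    have h2 : ((m + Finsupp.single i 1 : Fin 2 →₀ ℕ)) j = m j := by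
      simp [Finsupp.single_apply, hij]
    rw [h1, h2]
    ring

lemma totalDegree_pderiv_le' {i : Fin 2} {p : P2} {k : ℕ} (h : p.totalDegree ≤ k + 1) :
    (pderiv i p).totalDegree ≤ k := by
  apply Finset.sup_le
  intro m hm
  have hc : coeff m (pderiv i p) ≠ 0 := mem_support_iff.mp hm
  rw [coeff_pderiv'] at hc
  have h2 : coeff (m + Finsupp.single i 1) p ≠ 0 := fun h0 => hc (by rw [h0, mul_zero])
  have h3 := le_totalDegree (mem_support_iff.mpr h2)
  have h4 : ((m + Finsupp.single i 1).sum fun _ e => e) = (m.sum fun _ e => e) + 1 := by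
    rw [Finsupp.sum_add_index (by simp) (by intros; rfl)]
    simp
  omega

lemma tdeg_sub_le {p q : P2} {n : ℕ} (hp : p.totalDegree ≤ n) (hq : q.totalDegree ≤ n) :
    (p - q).totalDegree ≤ n := by
  rw [sub_eq_add_neg]
  refine (totalDegree_add p (-q)).trans (max_le hp ?_)
  rw [show -q = (-1 : ℝ) • q by module]
  exact (totalDegree_smul_le _ _).trans hq

/-- The matrix `curl v` of a polynomial vector field, defined row-wise:
`(curl v)_{i1} = ∂₂ vᵢ`, `(curl v)_{i2} = -∂₁ vᵢ`. -/
noncomputable def pcurl (v : Fin 2 → P2) : Matrix (Fin 2) (Fin 2) P2 :=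
  Matrix.of fun i j =>
    if j = 0 then pderiv (1 : Fin 2) (v i) else -(pderiv (0 : Fin 2) (v i))

/-- `sym curl v := (curl v + (curl v)ᵀ)/2`. -/
noncomputable def psymCurl (v : Fin 2 → P2) : Matrix (Fin 2) (Fin 2) P2 :=
  (1 / 2 : ℝ) • (pcurl v + (pcurl v)ᵀ)

/-- `div div τ := Σ_{i,j} ∂ᵢ∂ⱼ τ_{ij}`. -/
noncomputable def pdivDiv (τ : Matrix (Fin 2) (Fin 2) P2) : P2 :=
  ∑ i : Fin 2, ∑ j : Fin 2, pderiv i (pderiv j (τ i j))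

/-- The matrix `x xᵀ q` with `(i,j)`-entry `Xᵢ · Xⱼ · q`. -/
noncomputable def xxT (q : P2) : Matrix (Fin 2) (Fin 2) P2 :=
  Matrix.of fun i j => X i * X j * q

/-- The polynomial vector `x^⊥ = (X₂, -X₁)`. -/
noncomputable def xPerp : Fin 2 → P2 := ![X 1, -X 0]

/-- `rot τ`, with components `(rot τ)ᵢ = ∂₁ τ_{i2} - ∂₂ τ_{i1}`. -/
noncomputable def prot (τ : Matrix (Fin 2) (Fin 2) P2) : Fin 2 → P2 :=
  fun i => pderiv (0 : Fin 2) (τ i 1) - pderiv (1 : Fin 2) (τ i 0)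

/-- The Hessian matrix `∇²q` with entries `∂ᵢ∂ⱼ q`. -/
noncomputable def phess (q : P2) : Matrix (Fin 2) (Fin 2) P2 :=
  Matrix.of fun i j => pderiv i (pderiv j q)

/-- `sym(x^⊥ ⊗ v)`, the symmetric matrix with `(i,j)`-entry
`((x^⊥)ᵢ vⱼ + vᵢ (x^⊥)ⱼ)/2`. -/
noncomputable def symTen (v : Fin 2 → P2) : Matrix (Fin 2) (Fin 2) P2 :=
  Matrix.of fun i j => (1 / 2 : ℝ) • (xPerp i * v j + v i * xPerp j)

/-- The gradient matrix `∇v` with entries `(∇v)_{ij} = ∂ⱼ vᵢ`. -/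
noncomputable def pgrad (v : Fin 2 → P2) : Matrix (Fin 2) (Fin 2) P2 :=
  Matrix.of fun i j => pderiv j (v i)

/-- The symmetric gradient `def v := (∇v + (∇v)ᵀ)/2`. -/
noncomputable def pdef (v : Fin 2 → P2) : Matrix (Fin 2) (Fin 2) P2 :=
  (1 / 2 : ℝ) • (pgrad v + (pgrad v)ᵀ)

/-- The matrix `x^⊥ (x^⊥)ᵀ q` with `(i,j)`-entry `(x^⊥)ᵢ (x^⊥)ⱼ q`. -/
noncomputable def xPerpxPerpT (q : P2) : Matrix (Fin 2) (Fin 2) P2 :=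
  Matrix.of fun i j => xPerp i * xPerp j * q

/-- `rot rot τ := ∂₁(rot τ)₂ − ∂₂(rot τ)₁`. -/
noncomputable def protRot (τ : Matrix (Fin 2) (Fin 2) P2) : P2 :=
  pderiv (0 : Fin 2) (prot τ 1) - pderiv (1 : Fin 2) (prot τ 0)

/-- A symmetric polynomial matrix of degree ≤ k with `rot rot τ = 0` is the
symmetric gradient of a polynomial vector field of degree ≤ k+1. -/
theorem stmt_19 (k : ℕ) (hk : 2 ≤ k) (τ : Matrix (Fin 2) (Fin 2) P2)
    (hsym : τᵀ = τ) (hdeg : ∀ i j, (τ i j).totalDegree ≤ k)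
    (h : protRot τ = 0) :
    ∃ v : Fin 2 → P2, (∀ i, (v i).totalDegree ≤ k + 1) ∧ τ = pdef v := by
  classical
  have hτ01 : τ 1 0 = τ 0 1 := by
    conv_lhs => rw [← hsym]
    rfl
  set A := antid 0 (τ 0 0) with hA
  set B := antid 1 (τ 1 1) with hB
  set w : P2 := (2 : ℝ) • τ 0 1 - pderiv 1 A - pderiv 0 B with hw
  have hdA : pderiv 0 A = τ 0 0 := pderiv_antid 0 _
  have hdB : pderiv 1 B = τ 1 1 := pderiv_antid 1 _
  have hAdeg : A.totalDegree ≤ k + 1 := totalDegree_antid_le (hdeg 0 0)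
  have hBdeg : B.totalDegree ≤ k + 1 := totalDegree_antid_le (hdeg 1 1)
  have hwdeg : w.totalDegree ≤ k := by
    refine tdeg_sub_le (tdeg_sub_le ((totalDegree_smul_le _ _).trans (hdeg 0 1)) ?_) ?_
    · exact totalDegree_pderiv_le' hAdeg
    · exact totalDegree_pderiv_le' hBdeg
  have hw01 : pderiv 0 (pderiv 1 w) = 0 := by
    have hpr : pderiv 0 (pderiv 0 (τ 1 1)) - pderiv 0 (pderiv 1 (τ 1 0)) -
        (pderiv 1 (pderiv 0 (τ 0 1)) - pderiv 1 (pderiv 1 (τ 0 0))) = 0 := by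
      have := h
      simp only [protRot, prot, map_sub] at this
      exact this
    rw [hτ01] at hpr
    have e1 : pderiv 0 (pderiv 1 (pderiv 1 A)) = pderiv 1 (pderiv 1 (τ 0 0)) := by
      rw [pderiv_comm' 0 1, pderiv_comm' 0 1, hdA]
    have e2 : pderiv 0 (pderiv 1 (pderiv 0 B)) = pderiv 0 (pderiv 0 (τ 1 1)) := by
      rw [show pderiv 1 (pderiv 0 B) = pderiv 0 (pderiv 1 B) from pderiv_comm' 1 0 B, hdB]
    have e3 : pderiv 1 (pderiv 0 (τ 0 1)) = pderiv 0 (pderiv 1 (τ 0 1)) := pderiv_comm' 1 0 _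
    rw [hw, two_smul]
    simp only [map_sub, map_add, e1, e2]
    rw [e3] at hpr
    linear_combination -hpr
  set g : P2 := ∑ m ∈ w.support.filter (fun m => (m : Fin 2 →₀ ℕ) 0 = 0),
      monomial m (coeff m w) with hg
  have coeff_g : ∀ n : Fin 2 →₀ ℕ,
      coeff n g = if (n : Fin 2 →₀ ℕ) 0 = 0 then coeff n w else 0 := by
    intro n
    rw [hg, coeff_sum]
    by_cases hn0 : (n : Fin 2 →₀ ℕ) 0 = 0
    · rw [if_pos hn0]
      rw [Finset.sum_eq_single n (fun b _ hb => by rw [coeff_monomial, if_neg hb])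
        (fun hn => by
          rw [coeff_monomial, if_pos rfl]
          by_contra hc
          exact hn (Finset.mem_filter.mpr ⟨mem_support_iff.mpr hc, hn0⟩))]
      rw [coeff_monomial, if_pos rfl]
    · rw [if_neg hn0]
      apply Finset.sum_eq_zero
      intro b hb
      rw [coeff_monomial, if_neg]
      intro hbn
      exact hn0 (hbn ▸ (Finset.mem_filter.mp hb).2)
  have hg0 : pderiv 0 g = 0 := by
    apply MvPolynomial.ext
    intro m
    rw [coeff_pderiv', coeff_g]
    have : ((m + Finsupp.single 0 1 : Fin 2 →₀ ℕ)) 0 = m 0 + 1 := by simp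
    rw [this, if_neg (by omega)]
    simp
  have hgdeg : g.totalDegree ≤ k := by
    rw [hg]
    apply totalDegree_finsetSum_le
    intro m hm
    refine (totalDegree_monomial_le _ _).trans ?_
    exact (le_totalDegree (Finset.mem_filter.mp hm).1).trans hwdeg
  set f : P2 := w - g with hf
  have hsupp1 : ∀ m ∈ (pderiv 1 w).support, (m : Fin 2 →₀ ℕ) 0 = 0 :=
    supp_of_pderiv_zero hw01
  have hf1 : pderiv 1 f = 0 := by
    apply MvPolynomial.ext
    intro m
    rw [hf, map_sub, coeff_sub, coeff_zero]
    rw [coeff_pderiv' 1 g m]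
    rw [coeff_g]
    have hm0 : ((m + Finsupp.single 1 1 : Fin 2 →₀ ℕ)) 0 = m 0 := by simp
    rw [hm0]
    by_cases hc : (m : Fin 2 →₀ ℕ) 0 = 0
    · rw [if_pos hc, ← coeff_pderiv' 1 w m, sub_self]
    · rw [if_neg hc, mul_zero, sub_zero]
      by_contra hne
      exact hc (hsupp1 m (mem_support_iff.mpr hne))
  have hfg : f + g = w := sub_add_cancel w g
  have hfdeg : f.totalDegree ≤ k := tdeg_sub_le hwdeg hgdeg
  set v : Fin 2 → P2 := ![A + antid 1 g, B + antid 0 f] with hv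
  have hv0 : v 0 = A + antid 1 g := rfl
  have hv1 : v 1 = B + antid 0 f := rfl
  have e00 : pderiv 0 (v 0) = τ 0 0 := by
    rw [hv0, map_add, hdA, pderiv_antid_ne hg0 (by decide), add_zero]
  have e11 : pderiv 1 (v 1) = τ 1 1 := by
    rw [hv1, map_add, hdB, pderiv_antid_ne hf1 (by decide), add_zero]
  have emix : pderiv 1 (v 0) + pderiv 0 (v 1) = (2 : ℝ) • τ 0 1 := by
    rw [hv0, hv1, map_add, map_add, pderiv_antid 1 g, pderiv_antid 0 f]
    have : pderiv 1 A + g + (pderiv 0 B + f) = pderiv 1 A + pderiv 0 B + w := by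
      rw [← hfg]; ring
    rw [this, hw]
    module
  refine ⟨v, ?_, ?_⟩
  · intro i
    fin_cases i
    · exact (totalDegree_add _ _).trans (max_le hAdeg (totalDegree_antid_le hgdeg))
    · exact (totalDegree_add _ _).trans (max_le hBdeg (totalDegree_antid_le hfdeg))
  · apply Matrix.ext
    intro i j
    fin_cases i <;> fin_cases j
    · show τ 0 0 = (1/2 : ℝ) • (pderiv 0 (v 0) + pderiv 0 (v 0))
      rw [e00, ← two_smul ℝ (τ 0 0), smul_smul]
      norm_num
    · show τ 0 1 = (1/2 : ℝ) • (pderiv 1 (v 0) + pderiv 0 (v 1))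
      rw [emix, smul_smul]
      norm_num
    · show τ 1 0 = (1/2 : ℝ) • (pderiv 0 (v 1) + pderiv 1 (v 0))
      rw [add_comm, emix, smul_smul, hτ01]
      norm_num
    · show τ 1 1 = (1/2 : ℝ) • (pderiv 1 (v 1) + pderiv 1 (v 1))
      rw [e11, ← two_smul ℝ (τ 1 1), smul_smul]
      norm_num
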